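/- arXiv:2208.10025 — 3 statements merged into one kernel-verified Lean document; each statement's English description precedes it below -/
import Mathlib

section
/- Let f : ℝ^d → ℝ be L-smooth, h : ℝ^d → ℝ convex, Φ = f + h, and η ∈ (0, 1/L]. Given a point x and any vector v ∈ ℝ^d, define x⁺ := prox_{ηh}(x - ηv) and the gradient mapping G_η(x) := (1/η)(x - prox_{ηh}(x - η∇f(x))). Then Φ(x⁺) ≤ Φ(x) - (η/2)‖G_η(x)‖² - (1/(2η) - L/2)‖x⁺ - x‖² + (η/2)‖v - ∇f(x)‖². -/
open scoped RealInnerProductSpace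

section Aux

variable {E : Type*} [NormedAddCommGroup E] [InnerProductSpace ℝ E]

/-- Descent lemma for functions with Lipschitz gradient. -/
lemma descent_lemma [CompleteSpace E] (f : E → ℝ) (g : E → E) (L : ℝ) (hL : 0 ≤ L)
    (hgrad : ∀ x, HasGradientAt f (g x) x)
    (hsmooth : ∀ x y, ‖g x - g y‖ ≤ L * ‖x - y‖) (x y : E) :
    f y ≤ f x + ⟪g x, y - x⟫ + L / 2 * ‖y - x‖ ^ 2 := by
  set z := y - x with hz
  have hline : ∀ t : ℝ, HasDerivAt (fun s : ℝ => f (x + s • z)) ⟪g (x + t • z), z⟫ t := by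
    intro t
    have h1 : HasDerivAt (fun s : ℝ => x + s • z) z t := by
      simpa using ((hasDerivAt_id t).smul_const z).const_add x
    have h2 := ((hgrad (x + t • z)).hasFDerivAt).comp_hasDerivAt t h1
    simpa [InnerProductSpace.toDual_apply_apply, Function.comp_def] using h2
  have hgcont : Continuous g := by
    have : LipschitzWith (Real.toNNReal L) g := by
      apply LipschitzWith.of_dist_le_mul
      intro a b
      rw [dist_eq_norm, dist_eq_norm, Real.coe_toNNReal L hL]
      exact hsmooth a b
    exact this.continuous
  have hcont : Continuous (fun t : ℝ => ⟪g (x + t • z), z⟫) :=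
    (hgcont.comp (continuous_const.add (continuous_id.smul continuous_const))).inner
      continuous_const
  have hInt : IntervalIntegrable (fun t : ℝ => ⟪g (x + t • z), z⟫) MeasureTheory.volume 0 1 :=
    hcont.intervalIntegrable 0 1
  have hInt2 : IntervalIntegrable (fun t : ℝ => ⟪g x, z⟫ + t * (L * ‖z‖ ^ 2))
      MeasureTheory.volume 0 1 :=
    (continuous_const.add (continuous_id.mul continuous_const)).intervalIntegrable 0 1
  have hFTC : ∫ t in (0:ℝ)..1, ⟪g (x + t • z), z⟫ = f (x + (1:ℝ) • z) - f (x + (0:ℝ) • z) :=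
    intervalIntegral.integral_eq_sub_of_hasDerivAt (fun t _ => hline t) hInt
  have hmono : (∫ t in (0:ℝ)..1, ⟪g (x + t • z), z⟫) ≤
      ∫ t in (0:ℝ)..1, (⟪g x, z⟫ + t * (L * ‖z‖ ^ 2)) := by
    apply intervalIntegral.integral_mono_on (by norm_num) hInt hInt2
    intro t ht
    have h1 : ⟪g (x + t • z), z⟫ - ⟪g x, z⟫ = ⟪g (x + t • z) - g x, z⟫ :=
      (inner_sub_left _ _ _).symm
    have h2 : ⟪g (x + t • z) - g x, z⟫ ≤ ‖g (x + t • z) - g x‖ * ‖z‖ :=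
      real_inner_le_norm _ _
    have h3 : ‖g (x + t • z) - g x‖ ≤ L * ‖t • z‖ := by
      simpa using hsmooth (x + t • z) x
    have h4 : ‖t • z‖ = t * ‖z‖ := by
      rw [norm_smul, Real.norm_eq_abs, abs_of_nonneg ht.1]
    have h5 : ‖g (x + t • z) - g x‖ * ‖z‖ ≤ t * (L * ‖z‖ ^ 2) := by
      calc ‖g (x + t • z) - g x‖ * ‖z‖ ≤ (L * ‖t • z‖) * ‖z‖ :=
            mul_le_mul_of_nonneg_right h3 (norm_nonneg z)
        _ = t * (L * ‖z‖ ^ 2) := by rw [h4]; ring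
    linarith
  have hval : (∫ t in (0:ℝ)..1, (⟪g x, z⟫ + t * (L * ‖z‖ ^ 2))) =
      ⟪g x, z⟫ + L / 2 * ‖z‖ ^ 2 := by
    rw [intervalIntegral.integral_add (intervalIntegrable_const)
        ((by fun_prop : Continuous fun t : ℝ => t * (L * ‖z‖ ^ 2)).intervalIntegrable 0 1),
      intervalIntegral.integral_const, intervalIntegral.integral_mul_const, integral_id]
    norm_num
    ring
  have he1 : x + (1:ℝ) • z = y := by rw [one_smul, hz]; abel
  have he0 : x + (0:ℝ) • z = x := by rw [zero_smul, add_zero]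
  rw [he1, he0] at hFTC
  linarith [hmono.trans_eq hval, hFTC]

/-- Subgradient-type inequality at a proximal point. -/
lemma prox_ineq (h : E → ℝ) (hconv : ConvexOn ℝ Set.univ h) {η : ℝ} (hη : 0 < η) (z u : E)
    (hz : ∀ y, h z + (1 / (2 * η)) * ‖z - u‖ ^ 2 ≤ h y + (1 / (2 * η)) * ‖y - u‖ ^ 2)
    (y : E) : h z ≤ h y + (1 / η) * ⟪z - u, y - z⟫ := by
  apply le_of_forall_pos_le_add
  intro ε hε
  set C : ℝ := (1 / (2 * η)) * ‖y - z‖ ^ 2 with hCdef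
  have hC0 : 0 ≤ C := by positivity
  set t : ℝ := min 1 (ε / (C + 1)) with htdef
  have ht0 : 0 < t := lt_min one_pos (div_pos hε (by linarith))
  have ht1 : t ≤ 1 := min_le_left _ _
  have hcvx := hconv.2 (Set.mem_univ z) (Set.mem_univ y)
    (by linarith : (0:ℝ) ≤ 1 - t) ht0.le (by ring)
  have hpt : (1 - t) • z + t • y = z + t • (y - z) := by
    rw [smul_sub, sub_smul, one_smul]; abel
  rw [hpt] at hcvx
  have hopt := hz (z + t • (y - z))
  have hexp : ‖z + t • (y - z) - u‖ ^ 2 =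
      ‖z - u‖ ^ 2 + 2 * t * ⟪z - u, y - z⟫ + t ^ 2 * ‖y - z‖ ^ 2 := by
    have harr : z + t • (y - z) - u = (z - u) + t • (y - z) := by abel
    rw [harr, norm_add_sq_real, real_inner_smul_right, norm_smul, Real.norm_eq_abs,
      abs_of_nonneg ht0.le, mul_pow]
    ring
  rw [hexp] at hopt
  simp only [smul_eq_mul] at hcvx
  have step : t * h z ≤ t * (h y + 2 * (1 / (2 * η)) * ⟪z - u, y - z⟫ + t * C) := by
    rw [hCdef]; nlinarith [hopt, hcvx]
  have hdiv : h z ≤ h y + 2 * (1 / (2 * η)) * ⟪z - u, y - z⟫ + t * C :=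
    le_of_mul_le_mul_left step ht0
  have htC : t * C ≤ ε := by
    calc t * C ≤ (ε / (C + 1)) * C :=
          mul_le_mul_of_nonneg_right (min_le_right _ _) hC0
      _ ≤ ε := by
          rw [div_mul_eq_mul_div, div_le_iff₀ (by linarith : (0:ℝ) < C + 1)]
          nlinarith
  have hcoef : 2 * (1 / (2 * η)) * ⟪z - u, y - z⟫ = (1 / η) * ⟪z - u, y - z⟫ := by
    field_simp
  linarith [hdiv, htC, hcoef.le, hcoef.ge]

end Aux

/-- Key proximal descent inequality: for `L`-smooth `f`, convex `h`, `Φ = f + h`,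
`η ∈ (0, 1/L]`, `x⁺ = prox_{ηh}(x - ηv)` and gradient mapping
`G_η(x) = (1/η)(x - prox_{ηh}(x - η∇f(x)))`,
`Φ(x⁺) ≤ Φ(x) - (η/2)‖G_η(x)‖² - (1/(2η) - L/2)‖x⁺-x‖² + (η/2)‖v - ∇f(x)‖²`. -/
theorem stmt1 {d : ℕ} (f h : EuclideanSpace ℝ (Fin d) → ℝ)
    (g : EuclideanSpace ℝ (Fin d) → EuclideanSpace ℝ (Fin d)) (L η : ℝ)
    (hL : 0 < L) (hη1 : 0 < η) (hη2 : η ≤ 1 / L)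
    (hgrad : ∀ x, HasGradientAt f (g x) x)
    (hsmooth : ∀ x y, ‖g x - g y‖ ≤ L * ‖x - y‖)
    (hconv : ConvexOn ℝ Set.univ h)
    (x v xplus p : EuclideanSpace ℝ (Fin d))
    (hxplus : ∀ y, h xplus + (1 / (2 * η)) * ‖xplus - (x - η • v)‖ ^ 2 ≤
      h y + (1 / (2 * η)) * ‖y - (x - η • v)‖ ^ 2)
    (hp : ∀ y, h p + (1 / (2 * η)) * ‖p - (x - η • g x)‖ ^ 2 ≤
      h y + (1 / (2 * η)) * ‖y - (x - η • g x)‖ ^ 2) :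
    f xplus + h xplus ≤ f x + h x - (η / 2) * ‖(1 / η) • (x - p)‖ ^ 2
      - (1 / (2 * η) - L / 2) * ‖xplus - x‖ ^ 2 + (η / 2) * ‖v - g x‖ ^ 2 := by
  -- abbreviations for the scalar atoms
  have h1 : f xplus ≤ f x + ⟪g x, xplus - x⟫ + L / 2 * ‖xplus - x‖ ^ 2 :=
    descent_lemma f g L hL.le hgrad hsmooth x xplus
  have h2 : h xplus ≤ h p + (1 / η) * ⟪xplus - (x - η • v), p - xplus⟫ :=
    prox_ineq h hconv hη1 xplus (x - η • v) hxplus p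
  have h3 : h p ≤ h x + (1 / η) * ⟪p - (x - η • g x), x - p⟫ :=
    prox_ineq h hconv hη1 p (x - η • g x) hp x
  -- expand the inner products
  have e1 : ⟪p - (x - η • g x), x - p⟫ = -‖p - x‖ ^ 2 - η * ⟪g x, p - x⟫ := by
    simp only [inner_sub_left, inner_sub_right, inner_add_left, inner_add_right,
      real_inner_smul_left, real_inner_smul_right, real_inner_self_eq_norm_sq,
      norm_sub_sq_real, real_inner_comm p x, real_inner_comm (g x) x,
      real_inner_comm (g x) p]
    ring
  have e2 : ⟪xplus - (x - η • v), p - xplus⟫ =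
      ⟪xplus - x, p - x⟫ - ‖xplus - x‖ ^ 2 + η * ⟪v, p - x⟫ - η * ⟪v, xplus - x⟫ := by
    simp only [inner_sub_left, inner_sub_right, inner_add_left, inner_add_right,
      real_inner_smul_left, real_inner_smul_right, real_inner_self_eq_norm_sq,
      norm_sub_sq_real, real_inner_comm p x, real_inner_comm xplus x,
      real_inner_comm xplus p, real_inner_comm v x, real_inner_comm v p,
      real_inner_comm v xplus]
    ring
  have e3 : ⟪g x - v, (xplus - x) - (p - x)⟫ =
      ⟪g x, xplus - x⟫ - ⟪g x, p - x⟫ - ⟪v, xplus - x⟫ + ⟪v, p - x⟫ := by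
    simp only [inner_sub_left, inner_sub_right]
    ring
  have e4 : ‖(xplus - x) - (p - x)‖ ^ 2 =
      ‖xplus - x‖ ^ 2 + ‖p - x‖ ^ 2 - 2 * ⟪xplus - x, p - x⟫ := by
    rw [norm_sub_sq_real]; ring
  -- Young's inequality
  have young : ⟪g x - v, (xplus - x) - (p - x)⟫ ≤
      (1 / (2 * η)) * ‖(xplus - x) - (p - x)‖ ^ 2 + (η / 2) * ‖g x - v‖ ^ 2 := by
    have hcs : ⟪g x - v, (xplus - x) - (p - x)⟫ ≤
        ‖g x - v‖ * ‖(xplus - x) - (p - x)‖ := real_inner_le_norm _ _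
    have hkey : (1 / (2 * η)) * ‖(xplus - x) - (p - x)‖ ^ 2 + (η / 2) * ‖g x - v‖ ^ 2
        - ‖g x - v‖ * ‖(xplus - x) - (p - x)‖
        = (1 / (2 * η)) * (‖(xplus - x) - (p - x)‖ - η * ‖g x - v‖) ^ 2 := by
      field_simp
      ring
    have hpos : 0 ≤ (1 / (2 * η)) * (‖(xplus - x) - (p - x)‖ - η * ‖g x - v‖) ^ 2 := by
      positivity
    linarith [hcs, hkey, hpos]
  -- rewrite the goal's norm terms
  have gnorm : (η / 2) * ‖(1 / η) • (x - p)‖ ^ 2 = (1 / (2 * η)) * ‖p - x‖ ^ 2 := by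
    rw [norm_smul, Real.norm_eq_abs, abs_of_pos (by positivity : (0:ℝ) < 1 / η),
      norm_sub_rev, mul_pow]
    field_simp
  have vnorm : ‖v - g x‖ = ‖g x - v‖ := norm_sub_rev _ _
  -- clear the η-products
  have h2' : h xplus ≤ h p + (1 / η) * ⟪xplus - x, p - x⟫ - (1 / η) * ‖xplus - x‖ ^ 2
      + ⟪v, p - x⟫ - ⟪v, xplus - x⟫ := by
    rw [e2] at h2
    have : (1 / η) * (⟪xplus - x, p - x⟫ - ‖xplus - x‖ ^ 2 + η * ⟪v, p - x⟫
        - η * ⟪v, xplus - x⟫) = (1 / η) * ⟪xplus - x, p - x⟫ - (1 / η) * ‖xplus - x‖ ^ 2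
        + ⟪v, p - x⟫ - ⟪v, xplus - x⟫ := by
      field_simp
    linarith [h2, this.le, this.ge]
  have h3' : h p ≤ h x - (1 / η) * ‖p - x‖ ^ 2 - ⟪g x, p - x⟫ := by
    rw [e1] at h3
    have : (1 / η) * (-‖p - x‖ ^ 2 - η * ⟪g x, p - x⟫)
        = -(1 / η) * ‖p - x‖ ^ 2 - ⟪g x, p - x⟫ := by
      field_simp
    linarith [h3, this.le, this.ge]
  have young' : ⟪g x, xplus - x⟫ - ⟪g x, p - x⟫ - ⟪v, xplus - x⟫ + ⟪v, p - x⟫ ≤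
      (1 / (2 * η)) * (‖xplus - x‖ ^ 2 + ‖p - x‖ ^ 2 - 2 * ⟪xplus - x, p - x⟫)
      + (η / 2) * ‖g x - v‖ ^ 2 := by
    rw [← e3, ← e4]
    exact young
  have hsplit : (1 / (2 * η)) * (‖xplus - x‖ ^ 2 + ‖p - x‖ ^ 2 - 2 * ⟪xplus - x, p - x⟫)
      = (1 / (2 * η)) * ‖xplus - x‖ ^ 2 + (1 / (2 * η)) * ‖p - x‖ ^ 2
        - (1 / η) * ⟪xplus - x, p - x⟫ := by
    field_simp
  have hhalf1 : (1 / η) * ‖xplus - x‖ ^ 2 =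
      (1 / (2 * η)) * ‖xplus - x‖ ^ 2 + (1 / (2 * η)) * ‖xplus - x‖ ^ 2 := by
    field_simp; ring
  have hhalf2 : (1 / η) * ‖p - x‖ ^ 2 =
      (1 / (2 * η)) * ‖p - x‖ ^ 2 + (1 / (2 * η)) * ‖p - x‖ ^ 2 := by
    field_simp; ring
  have hgoalA : (1 / (2 * η) - L / 2) * ‖xplus - x‖ ^ 2
      = (1 / (2 * η)) * ‖xplus - x‖ ^ 2 - L / 2 * ‖xplus - x‖ ^ 2 := by ring
  rw [vnorm, gnorm, hgoalA]
  rw [hsplit] at young'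
  linarith [h1, h2', h3', young', hhalf1.le, hhalf1.ge, hhalf2.le, hhalf2.ge]
end

section
/- Let f(x) = (1/n) ∑_{i=1}^n f_i(x) where the family {f_i} is average L-smooth. Let x, y be fixed points, and let v := (1/b) ∑_{i ∈ I_b} (∇f_i(x) - ∇f_i(y)) + g, where I_b is a multiset of b indices sampled independently and uniformly at random from {1,...,n}, and g is a fixed vector. Then E‖v - ∇f(x)‖² ≤ (L²/b)‖x - y‖² + ‖g - ∇f(y)‖². -/
open Finset

lemma sum_eval_aux {ι α : Type*} [Fintype ι] [DecidableEq ι] [Fintype α] (j : ι) (F : α → ℝ) :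
    ∑ s : ι → α, F (s j) = (Fintype.card α : ℝ) ^ (Fintype.card ι - 1) * ∑ i, F i := by
  rw [← Equiv.sum_comp (Equiv.funSplitAt j α).symm (fun s => F (s j))]
  have h : ∀ p : α × ({k : ι // k ≠ j} → α), ((Equiv.funSplitAt j α).symm p) j = p.1 := by
    intro p; simp [Equiv.funSplitAt, Equiv.piSplitAt]
  simp only [Function.comp, h]
  rw [Fintype.sum_prod_type]
  simp [Finset.sum_const, card_univ, Fintype.card_fun, Fintype.card_subtype_compl,
    Finset.sum_mul, mul_comm]

lemma sum_eval2_aux {ι α : Type*} [Fintype ι] [DecidableEq ι] [Fintype α] {j k : ι}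
    (hkj : k ≠ j) (F : α → α → ℝ) :
    ∑ s : ι → α, F (s j) (s k)
      = (Fintype.card α : ℝ) ^ (Fintype.card {m : ι // m ≠ j} - 1) * ∑ i, ∑ i', F i i' := by
  rw [← Equiv.sum_comp (Equiv.funSplitAt j α).symm (fun s => F (s j) (s k))]
  have h1 : ∀ p : α × ({m : ι // m ≠ j} → α), ((Equiv.funSplitAt j α).symm p) j = p.1 := by
    intro p; simp [Equiv.funSplitAt, Equiv.piSplitAt]
  have h2 : ∀ p : α × ({m : ι // m ≠ j} → α),
      ((Equiv.funSplitAt j α).symm p) k = p.2 ⟨k, hkj⟩ := by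
    intro p; simp [Equiv.funSplitAt, Equiv.piSplitAt, hkj]
  simp only [Function.comp, h1, h2]
  rw [Fintype.sum_prod_type]
  rw [Finset.mul_sum]
  refine Finset.sum_congr rfl fun i _ => ?_
  exact sum_eval_aux (⟨k, hkj⟩ : {m : ι // m ≠ j}) (F i)

/-- Variance bound for the SVRG estimator: with average `L`-smoothness,
`E‖v - ∇f(x)‖² ≤ (L²/b)‖x-y‖² + ‖g - ∇f(y)‖²`, the expectation taken over a
minibatch of `b` indices sampled independently and uniformly from `{1,…,n}`. -/
theorem stmt2 {d n b : ℕ} (hn : 0 < n) (hb : 0 < b)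
    (fi : Fin n → EuclideanSpace ℝ (Fin d) → ℝ)
    (gi : Fin n → EuclideanSpace ℝ (Fin d) → EuclideanSpace ℝ (Fin d))
    (L : ℝ)
    (hgrad : ∀ i x, HasGradientAt (fi i) (gi i x) x)
    (havg : ∀ x y : EuclideanSpace ℝ (Fin d),
      (n : ℝ)⁻¹ * ∑ i, ‖gi i x - gi i y‖ ^ 2 ≤ L ^ 2 * ‖x - y‖ ^ 2)
    (x y g : EuclideanSpace ℝ (Fin d)) :
    ((n : ℝ) ^ b)⁻¹ *
      ∑ s : Fin b → Fin n,
        ‖(b : ℝ)⁻¹ • (∑ j, (gi (s j) x - gi (s j) y)) + g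
          - (n : ℝ)⁻¹ • ∑ i, gi i x‖ ^ 2
      ≤ L ^ 2 / b * ‖x - y‖ ^ 2 + ‖g - (n : ℝ)⁻¹ • ∑ i, gi i y‖ ^ 2 := by
  classical
  have hn' : (n : ℝ) ≠ 0 := Nat.cast_ne_zero.mpr hn.ne'
  have hb' : (b : ℝ) ≠ 0 := Nat.cast_ne_zero.mpr hb.ne'
  set a : Fin n → EuclideanSpace ℝ (Fin d) := fun i => gi i x - gi i y with ha
  set abar : EuclideanSpace ℝ (Fin d) := (n : ℝ)⁻¹ • ∑ i, a i with habar
  set c : Fin n → EuclideanSpace ℝ (Fin d) := fun i => a i - abar with hc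
  set D : EuclideanSpace ℝ (Fin d) := g - (n : ℝ)⁻¹ • ∑ i, gi i y with hD
  have hsuma : (∑ i, a i) = (n : ℝ) • abar := by
    rw [habar, smul_smul, mul_inv_cancel₀ hn', one_smul]
  have hcsum : ∑ i, c i = 0 := by
    simp only [hc, Finset.sum_sub_distrib, Finset.sum_const, card_univ, Fintype.card_fin]
    rw [hsuma, ← Nat.cast_smul_eq_nsmul ℝ, sub_self]
  -- rewrite the summand
  have key : ∀ s : Fin b → Fin n,
      (b : ℝ)⁻¹ • (∑ j, (gi (s j) x - gi (s j) y)) + g - (n : ℝ)⁻¹ • ∑ i, gi i x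
        = (b : ℝ)⁻¹ • (∑ j, c (s j)) + D := by
    intro s
    have h1 : (n : ℝ)⁻¹ • (∑ i, gi i x) = abar + (n : ℝ)⁻¹ • ∑ i, gi i y := by
      rw [habar, ha]
      simp only [Finset.sum_sub_distrib, smul_sub]
      abel
    have h2 : (∑ j, c (s j)) = (∑ j, a (s j)) - (b : ℝ) • abar := by
      simp only [hc, Finset.sum_sub_distrib, Finset.sum_const, card_univ, Fintype.card_fin]
      rw [← Nat.cast_smul_eq_nsmul ℝ]
    rw [h1, h2, hD, smul_sub, smul_smul, inv_mul_cancel₀ hb', one_smul]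
    simp only [ha]
    abel
  simp only [key]
  -- expand the squared norm
  have expand : ∀ s : Fin b → Fin n,
      ‖(b : ℝ)⁻¹ • (∑ j, c (s j)) + D‖ ^ 2
        = (b : ℝ)⁻¹ ^ 2 * (∑ j, ∑ k, (inner ℝ (c (s j)) (c (s k)) : ℝ))
          + 2 * ((b : ℝ)⁻¹ * ∑ j, (inner ℝ (c (s j)) D : ℝ)) + ‖D‖ ^ 2 := by
    intro s
    rw [norm_add_sq_real]
    congr 2
    · rw [norm_smul, mul_pow]
      congr 1
      · simp [sq_abs]
      · rw [← real_inner_self_eq_norm_sq, sum_inner]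
        refine Finset.sum_congr rfl fun j _ => ?_
        rw [inner_sum]
    · rw [real_inner_smul_left, sum_inner]
  simp only [expand]
  rw [Finset.sum_add_distrib, Finset.sum_add_distrib, ← Finset.mul_sum, ← Finset.mul_sum,
    ← Finset.mul_sum, Finset.sum_const, card_univ]
  have hcard : Fintype.card (Fin b → Fin n) = n ^ b := by
    simp [Fintype.card_fun]
  rw [hcard]
  -- the double-inner-product sum
  have hQ : (∑ s : Fin b → Fin n, ∑ j, ∑ k, (inner ℝ (c (s j)) (c (s k)) : ℝ))
      = (b : ℝ) * ((n : ℝ) ^ (b - 1) * ∑ i, ‖c i‖ ^ 2) := by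
    rw [Finset.sum_comm]
    have hzero2 : ∑ i, ∑ i', (inner ℝ (c i) (c i') : ℝ) = 0 := by
      have h1 : ∀ i, ∑ i', (inner ℝ (c i) (c i') : ℝ) = inner ℝ (c i) (∑ i', c i') := by
        intro i; rw [inner_sum]
      rw [Finset.sum_congr rfl fun i _ => h1 i, hcsum]
      simp
    have hrow : ∀ j : Fin b, (∑ s : Fin b → Fin n, ∑ k, (inner ℝ (c (s j)) (c (s k)) : ℝ))
        = (n : ℝ) ^ (b - 1) * ∑ i, ‖c i‖ ^ 2 := by
      intro j
      rw [Finset.sum_comm, ← Finset.add_sum_erase _ _ (Finset.mem_univ j)]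
      have hdiag : (∑ s : Fin b → Fin n, (inner ℝ (c (s j)) (c (s j)) : ℝ))
          = (n : ℝ) ^ (b - 1) * ∑ i, ‖c i‖ ^ 2 := by
        have := sum_eval_aux (ι := Fin b) (α := Fin n) j (fun i => (inner ℝ (c i) (c i) : ℝ))
        simp only [Fintype.card_fin] at this
        rw [this]
        congr 1
        refine Finset.sum_congr rfl fun i _ => ?_
        exact real_inner_self_eq_norm_sq _
      have hoff : ∀ k ∈ Finset.univ.erase j,
          (∑ s : Fin b → Fin n, (inner ℝ (c (s j)) (c (s k)) : ℝ)) = 0 := by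
        intro k hk
        have hkj : k ≠ j := Finset.ne_of_mem_erase hk
        rw [sum_eval2_aux hkj (fun i i' => (inner ℝ (c i) (c i') : ℝ)), hzero2, mul_zero]
      rw [Finset.sum_eq_zero hoff, add_zero, hdiag]
    rw [Finset.sum_congr rfl fun j _ => hrow j]
    simp [Finset.sum_const, card_univ, mul_comm]
  -- the cross term vanishes
  have hR : (∑ s : Fin b → Fin n, ∑ j, (inner ℝ (c (s j)) D : ℝ)) = 0 := by
    rw [Finset.sum_comm]
    refine Finset.sum_eq_zero fun j _ => ?_
    rw [sum_eval_aux (ι := Fin b) (α := Fin n) j (fun i => (inner ℝ (c i) D : ℝ))]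
    have : ∑ i, (inner ℝ (c i) D : ℝ) = inner ℝ (∑ i, c i) D := by rw [sum_inner]
    rw [this, hcsum, inner_zero_left, mul_zero]
  rw [hQ, hR, mul_zero, mul_zero, add_zero]
  -- variance reduction: ∑ ‖c i‖² ≤ ∑ ‖a i‖²
  have hvar : ∑ i, ‖c i‖ ^ 2 ≤ ∑ i, ‖a i‖ ^ 2 := by
    have hexp : ∀ i, ‖c i‖ ^ 2 = ‖a i‖ ^ 2 - 2 * (inner ℝ (a i) abar : ℝ) + ‖abar‖ ^ 2 := by
      intro i; rw [hc]; exact norm_sub_sq_real _ _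
    have hinner : ∑ i, (inner ℝ (a i) abar : ℝ) = (n : ℝ) * ‖abar‖ ^ 2 := by
      rw [← sum_inner, hsuma, real_inner_smul_left, real_inner_self_eq_norm_sq]
    calc ∑ i, ‖c i‖ ^ 2
        = ∑ i, ‖a i‖ ^ 2 - 2 * ((n : ℝ) * ‖abar‖ ^ 2) + (n : ℝ) * ‖abar‖ ^ 2 := by
          simp only [hexp, Finset.sum_add_distrib, Finset.sum_sub_distrib, ← Finset.mul_sum,
            hinner, Finset.sum_const, card_univ, Fintype.card_fin, nsmul_eq_mul]
      _ = ∑ i, ‖a i‖ ^ 2 - (n : ℝ) * ‖abar‖ ^ 2 := by ring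
      _ ≤ ∑ i, ‖a i‖ ^ 2 := by
          have : 0 ≤ (n : ℝ) * ‖abar‖ ^ 2 := by positivity
          linarith
  have hbound : (n : ℝ)⁻¹ * ∑ i, ‖c i‖ ^ 2 ≤ L ^ 2 * ‖x - y‖ ^ 2 := by
    calc (n : ℝ)⁻¹ * ∑ i, ‖c i‖ ^ 2 ≤ (n : ℝ)⁻¹ * ∑ i, ‖a i‖ ^ 2 := by
          apply mul_le_mul_of_nonneg_left hvar; positivity
      _ ≤ L ^ 2 * ‖x - y‖ ^ 2 := havg x y
  -- power arithmetic
  obtain ⟨m, rfl⟩ : ∃ m, b = m + 1 := ⟨b - 1, (Nat.succ_pred_eq_of_pos hb).symm⟩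
  have hpow : ((n : ℝ) ^ (m + 1))⁻¹ * (n : ℝ) ^ (m + 1 - 1) = (n : ℝ)⁻¹ := by
    rw [Nat.add_sub_cancel, pow_succ]
    field_simp
  have hbpos : (0 : ℝ) < (m + 1 : ℕ) := by positivity
  have hDeq : ((n : ℝ) ^ (m + 1))⁻¹ * (((n : ℝ) ^ (m + 1) : ℝ) • ‖D‖ ^ 2) = ‖D‖ ^ 2 := by
    rw [smul_eq_mul, ← mul_assoc, inv_mul_cancel₀ (by positivity), one_mul]
  rw [mul_add]
  have hfirst : ((n : ℝ) ^ (m + 1))⁻¹ *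
      ((((m + 1 : ℕ) : ℝ)⁻¹) ^ 2 * (((m + 1 : ℕ) : ℝ) * ((n : ℝ) ^ (m + 1 - 1) * ∑ i, ‖c i‖ ^ 2)))
        ≤ L ^ 2 / ((m + 1 : ℕ) : ℝ) * ‖x - y‖ ^ 2 := by
    have heq : ((n : ℝ) ^ (m + 1))⁻¹ *
        ((((m + 1 : ℕ) : ℝ)⁻¹) ^ 2 * (((m + 1 : ℕ) : ℝ) * ((n : ℝ) ^ (m + 1 - 1) * ∑ i, ‖c i‖ ^ 2)))
        = (((m + 1 : ℕ) : ℝ))⁻¹ * ((n : ℝ)⁻¹ * ∑ i, ‖c i‖ ^ 2) := by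
      rw [Nat.add_sub_cancel] at *
      field_simp
      ring
    rw [heq, div_eq_inv_mul, mul_assoc]
    exact mul_le_mul_of_nonneg_left (by simpa [mul_assoc] using hbound) (by positivity)
  calc ((n : ℝ) ^ (m + 1))⁻¹ *
        ((((m + 1 : ℕ) : ℝ)⁻¹) ^ 2 * (((m + 1 : ℕ) : ℝ) * ((n : ℝ) ^ (m + 1 - 1) * ∑ i, ‖c i‖ ^ 2)))
        + ((n : ℝ) ^ (m + 1))⁻¹ * ((n ^ (m + 1) : ℕ) • ‖D‖ ^ 2)
      ≤ L ^ 2 / ((m + 1 : ℕ) : ℝ) * ‖x - y‖ ^ 2 + ‖D‖ ^ 2 := by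
        have h2 : ((n : ℝ) ^ (m + 1))⁻¹ * ((n ^ (m + 1) : ℕ) • ‖D‖ ^ 2) = ‖D‖ ^ 2 := by
          rw [nsmul_eq_mul, Nat.cast_pow, ← mul_assoc, inv_mul_cancel₀ (by positivity), one_mul]
        rw [h2]
        exact add_le_add_left hfirst _
    _ = L ^ 2 / ((m + 1 : ℕ) : ℝ) * ‖x - y‖ ^ 2 + ‖D‖ ^ 2 := rfl
end

section
/- Let f(x) = x² + 3 sin²(x) on ℝ. Then f is not convex, but f satisfies the Polyak-Łojasiewicz condition (f'(x))² ≥ 2μ(f(x) - f*) with μ = 1/32, where f* = 0 is the global minimum value of f. -/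
open Real

private lemma deriv_f (x : ℝ) :
    deriv (fun x : ℝ => x ^ 2 + 3 * Real.sin x ^ 2) x = 2 * x + 3 * Real.sin (2 * x) := by
  have h : HasDerivAt (fun x : ℝ => x ^ 2 + 3 * Real.sin x ^ 2)
      (2 * x + 3 * (2 * Real.sin x * Real.cos x)) x := by
    have h1 : HasDerivAt (fun x : ℝ => x ^ 2) (2 * x) x := by
      simpa using (hasDerivAt_pow 2 x)
    have h2 : HasDerivAt (fun x : ℝ => Real.sin x ^ 2) (2 * Real.sin x * Real.cos x) x := by
      exact ((Real.hasDerivAt_sin x).pow 2).congr_deriv (by norm_num [mul_comm, mul_left_comm])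
    exact h1.add ((h2.const_mul 3))
  rw [h.deriv, Real.sin_two_mul]

private lemma pl_nonneg {x : ℝ} (hx : 0 ≤ x) :
    (2 * x + 3 * Real.sin (2 * x)) ^ 2 ≥ (1 / 16) * (x ^ 2 + 3 * Real.sin x ^ 2) := by
  rcases le_or_gt x (π / 2) with h1 | h1
  · have hs : 0 ≤ Real.sin (2 * x) :=
      Real.sin_nonneg_of_nonneg_of_le_pi (by linarith) (by linarith)
    have hsq : Real.sin x ^ 2 ≤ x ^ 2 := Real.sin_sq_le_sq
    nlinarith [sq_nonneg x, sq_nonneg (Real.sin (2 * x))]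
  · have hsq1 : Real.sin x ^ 2 ≤ 1 := Real.sin_sq_le_one x
    rcases le_or_gt x 2 with h2 | h2
    · have hs : Real.sin (2 * x) ≥ π - 2 * x := by
        have := Real.sin_le (x := 2 * x - π) (by linarith [Real.pi_le_four])
        rw [Real.sin_sub_pi] at this
        linarith
      have hpi := Real.pi_gt_d6
      nlinarith [sq_nonneg (2 * x + 3 * Real.sin (2 * x) - (3 * π - 4 * x))]
    · have hs : Real.sin (2 * x) ≥ -1 := Real.neg_one_le_sin _
      nlinarith [sq_nonneg (x - 2)]

/-- `f(x) = x² + 3 sin² x` is nonconvex but satisfies the PL condition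
`(f'(x))² ≥ 2μ (f(x) - f*)` with `μ = 1/32` and `f* = 0 = f(0)` the global minimum. -/
theorem stmt6 :
    ¬ ConvexOn ℝ Set.univ (fun x : ℝ => x ^ 2 + 3 * Real.sin x ^ 2) ∧
    (fun x : ℝ => x ^ 2 + 3 * Real.sin x ^ 2) 0 = 0 ∧
    (∀ x : ℝ, 0 ≤ x ^ 2 + 3 * Real.sin x ^ 2) ∧
    (∀ x : ℝ, (deriv (fun x : ℝ => x ^ 2 + 3 * Real.sin x ^ 2) x) ^ 2 ≥
      2 * (1 / 32) * ((x ^ 2 + 3 * Real.sin x ^ 2) - 0)) := by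
  refine ⟨?_, by simp, fun x => by positivity, ?_⟩
  · intro hc
    have h := hc.2 (Set.mem_univ (0 : ℝ)) (Set.mem_univ π)
      (by norm_num : (0:ℝ) ≤ 1/2) (by norm_num : (0:ℝ) ≤ 1/2) (by norm_num)
    simp only [smul_eq_mul, mul_zero, zero_add, Real.sin_pi, Real.sin_zero] at h
    have hpi2 : (1/2 : ℝ) * π = π / 2 := by ring
    rw [hpi2, Real.sin_pi_div_two] at h
    have hpi := Real.pi_lt_d2
    nlinarith [Real.pi_gt_d6]
  · intro x
    rw [deriv_f]
    rcases le_or_gt 0 x with hx | hx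
    · have := pl_nonneg hx
      nlinarith
    · have := pl_nonneg (x := -x) (by linarith)
      rw [show (2 : ℝ) * -x = -(2 * x) by ring, Real.sin_neg, Real.sin_neg] at this
      nlinarith
end
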